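/- Functions of the form f(t) = Φ(ut+v) give equality in the one-dimensional Bobkov inequality: for all u, v ∈ ℝ, ∫_ℝ √(I(Φ(ut+v))² + (u·φ(ut+v))²) dγ(t) = I(∫_ℝ Φ(ut+v) dγ(t)). -/

import Mathlib

open Real MeasureTheory Set Filter

noncomputable def phi (s : ℝ) : ℝ := Real.exp (-s ^ 2 / 2) / Real.sqrt (2 * Real.pi)

noncomputable def Phi (t : ℝ) : ℝ := ∫ s in Set.Iic t, phi s

lemma phi_eq (s : ℝ) : phi s = Real.exp (-(1/2) * s ^ 2) * (Real.sqrt (2 * Real.pi))⁻¹ := by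
  rw [phi, div_eq_mul_inv]; ring_nf

lemma phi_pos (s : ℝ) : 0 < phi s := by
  apply div_pos (Real.exp_pos _)
  exact Real.sqrt_pos.2 (by positivity)

lemma phi_cont : Continuous phi := by
  unfold phi; fun_prop

lemma phi_integrable : Integrable phi := by
  have : Integrable (fun s : ℝ => Real.exp (-(1/2) * s ^ 2) * (Real.sqrt (2 * Real.pi))⁻¹) :=
    (integrable_exp_neg_mul_sq (by norm_num)).mul_const _
  exact this.congr (Filter.Eventually.of_forall fun s => (phi_eq s).symm)

lemma integral_phi : ∫ s, phi s = 1 := by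
  simp_rw [phi_eq]
  rw [integral_mul_const, integral_gaussian]
  rw [show (π / (1/2)) = 2 * π by ring]
  rw [mul_inv_cancel₀ (by positivity)]

lemma Phi_eq (x : ℝ) : Phi x = (∫ s in (0:ℝ)..x, phi s) + Phi 0 := by
  have h := intervalIntegral.integral_Iic_sub_Iic (μ := volume) (f := phi)
    (phi_integrable.integrableOn) (phi_integrable.integrableOn) (a := 0) (b := x)
  rw [Phi, Phi, ← h]; ring

lemma hasDerivAt_Phi (x : ℝ) : HasDerivAt Phi (phi x) x := by
  have h : HasDerivAt (fun y => (∫ s in (0:ℝ)..y, phi s) + Phi 0) (phi x) x :=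
    ((phi_cont.integral_hasStrictDerivAt 0 x).hasDerivAt).add_const _
  exact h.congr_of_eventuallyEq (Filter.Eventually.of_forall fun y => Phi_eq y)

lemma Phi_cont : Continuous Phi :=
  continuous_iff_continuousAt.2 fun x => (hasDerivAt_Phi x).continuousAt

lemma Phi_strictMono : StrictMono Phi := by
  intro a b hab
  have h : Phi b - Phi a = ∫ s in a..b, phi s := by
    rw [Phi, Phi]
    exact intervalIntegral.integral_Iic_sub_Iic phi_integrable.integrableOn
      phi_integrable.integrableOn
  have hpos : 0 < ∫ s in a..b, phi s :=
    intervalIntegral.intervalIntegral_pos_of_pos (phi_cont.intervalIntegrable a b)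
      (fun s => phi_pos s) hab
  linarith [h ▸ hpos]

lemma Phi_pos (x : ℝ) : 0 < Phi x := by
  rw [Phi]
  rw [setIntegral_pos_iff_support_of_nonneg_ae
    (Filter.Eventually.of_forall fun s => (phi_pos s).le) phi_integrable.integrableOn]
  have : Function.support phi = Set.univ := by
    ext s; simp [Function.mem_support, (phi_pos s).ne']
  rw [this, Set.univ_inter]
  simp [Real.volume_Iic]

lemma Phi_lt_one (x : ℝ) : Phi x < 1 := by
  have hsplit : Phi x + (∫ s in Set.Ioi x, phi s) = 1 := by
    rw [Phi, intervalIntegral.integral_Iic_add_Ioi phi_integrable.integrableOn phi_integrable.integrableOn,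
      integral_phi]
  have hpos : 0 < ∫ s in Set.Ioi x, phi s := by
    rw [setIntegral_pos_iff_support_of_nonneg_ae
      (Filter.Eventually.of_forall fun s => (phi_pos s).le) phi_integrable.integrableOn]
    have : Function.support phi = Set.univ := by
      ext s; simp [Function.mem_support, (phi_pos s).ne']
    rw [this, Set.univ_inter]
    simp [Real.volume_Ioi]
  linarith

noncomputable def GaussI (x : ℝ) : ℝ :=
  if 0 < x ∧ x < 1 then phi (Function.invFun Phi x) else 0

lemma GaussI_Phi (x : ℝ) : GaussI (Phi x) = phi x := by
  rw [GaussI, if_pos ⟨Phi_pos x, Phi_lt_one x⟩,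
    Function.leftInverse_invFun Phi_strictMono.injective x]

lemma phi_mul_phi (u v : ℝ) (t : ℝ) :
    phi (u * t + v) * phi t =
      Real.exp (-v ^ 2 / (2 * (1 + u ^ 2))) / (2 * Real.pi) *
        Real.exp (-((1 + u ^ 2) / 2) * (t + u * v / (1 + u ^ 2)) ^ 2) := by
  have hc : (0:ℝ) < 1 + u ^ 2 := by positivity
  rw [phi, phi, div_mul_div_comm, ← Real.exp_add,
    Real.mul_self_sqrt (by positivity : (0:ℝ) ≤ 2 * Real.pi), div_mul_eq_mul_div, ← Real.exp_add,
    mul_comm]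
  congr 1
  congr 1
  field_simp
  ring

lemma prod_integrable (u v : ℝ) : Integrable (fun t => phi (u * t + v) * phi t) := by
  have hc : (0:ℝ) < (1 + u ^ 2) / 2 := by positivity
  have h1 : Integrable (fun t : ℝ => Real.exp (-((1 + u ^ 2) / 2) * t ^ 2)) :=
    integrable_exp_neg_mul_sq hc
  have h2 := (h1.comp_add_right (u * v / (1 + u ^ 2))).const_mul
    (Real.exp (-v ^ 2 / (2 * (1 + u ^ 2))) / (2 * Real.pi))
  exact h2.congr (Filter.Eventually.of_forall fun t => (phi_mul_phi u v t).symm)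

lemma key_prod (u v : ℝ) :
    ∫ t, phi (u * t + v) * phi t =
      phi (v / Real.sqrt (1 + u ^ 2)) / Real.sqrt (1 + u ^ 2) := by
  have hc : (0:ℝ) < 1 + u ^ 2 := by positivity
  have hsc : (0:ℝ) < Real.sqrt (1 + u ^ 2) := Real.sqrt_pos.2 hc
  have hs2 : Real.sqrt (1 + u ^ 2) ^ 2 = 1 + u ^ 2 := Real.sq_sqrt hc.le
  have hsp : (0:ℝ) < Real.sqrt (2 * Real.pi) := Real.sqrt_pos.2 (by positivity)
  have hsp2 : Real.sqrt (2 * Real.pi) ^ 2 = 2 * Real.pi := Real.sq_sqrt (by positivity)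
  simp_rw [phi_mul_phi u v]
  rw [integral_const_mul, integral_add_right_eq_self
    (fun t : ℝ => Real.exp (-((1 + u ^ 2) / 2) * t ^ 2)) (u * v / (1 + u ^ 2)),
    integral_gaussian]
  rw [phi]
  rw [show (v / Real.sqrt (1 + u ^ 2)) ^ 2 = v ^ 2 / (1 + u ^ 2) by rw [div_pow, hs2]]
  rw [show -(v ^ 2 / (1 + u ^ 2)) / 2 = -v ^ 2 / (2 * (1 + u ^ 2)) by field_simp]
  rw [show Real.pi / ((1 + u ^ 2) / 2) = 2 * Real.pi / (1 + u ^ 2) by field_simp]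
  rw [Real.sqrt_div (by positivity : (0:ℝ) ≤ 2 * Real.pi)]
  rw [div_mul_div_comm, div_div, div_eq_div_iff (by positivity) (by positivity)]
  linear_combination rexp (-v ^ 2 / (2 * (1 + u ^ 2))) * Real.sqrt (1 + u ^ 2) * hsp2

lemma Phi_mem (x : ℝ) : 0 ≤ Phi x ∧ Phi x ≤ 1 := ⟨(Phi_pos x).le, (Phi_lt_one x).le⟩

lemma PhiMul_integrable (u v : ℝ) : Integrable (fun t => Phi (u * t + v) * phi t) := by
  apply phi_integrable.mono
  · exact ((Phi_cont.comp (by fun_prop)).mul phi_cont).aestronglyMeasurable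
  · refine Filter.Eventually.of_forall fun t => ?_
    rw [Real.norm_eq_abs, Real.norm_eq_abs, abs_of_nonneg (phi_pos t).le,
      abs_of_nonneg (mul_nonneg (Phi_pos _).le (phi_pos t).le)]
    nlinarith [Phi_pos (u * t + v), Phi_lt_one (u * t + v), phi_pos t]

lemma Phi_tendsto_atBot : Tendsto Phi atBot (nhds 0) := by
  have h : ∀ x, Phi x = ∫ t, Set.indicator (Set.Iic x) phi t := by
    intro x; rw [integral_indicator measurableSet_Iic]; rfl
  have := MeasureTheory.tendsto_integral_filter_of_dominated_convergence
    (μ := (volume : Measure ℝ)) (l := atBot) (F := fun x => Set.indicator (Set.Iic x) phi)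
    (f := fun _ => (0:ℝ)) phi
    (Filter.Eventually.of_forall fun x =>
      (phi_integrable.indicator measurableSet_Iic).aestronglyMeasurable)
    (Filter.Eventually.of_forall fun x => Filter.Eventually.of_forall fun t => by
      show |Set.indicator (Set.Iic x) phi t| ≤ phi t
      rcases le_or_gt t x with ht | ht
      · rw [Set.indicator_of_mem (Set.mem_Iic.2 ht), abs_of_nonneg (phi_pos t).le]
      · rw [Set.indicator_of_notMem (by simpa using ht)]; simpa using (phi_pos t).le)
    phi_integrable
    (Filter.Eventually.of_forall fun t => by
      refine Filter.Tendsto.congr' ?_ tendsto_const_nhds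
      filter_upwards [Filter.eventually_le_atBot (t - 1)] with x hx
      exact (Set.indicator_of_notMem (by simp; linarith) phi).symm)
  simp only [integral_zero] at this
  exact this.congr fun x => (h x).symm

lemma phi_le (s : ℝ) : phi s ≤ (Real.sqrt (2 * Real.pi))⁻¹ := by
  rw [phi, div_eq_mul_inv]
  have h1 : Real.exp (-s ^ 2 / 2) ≤ 1 := Real.exp_le_one_iff.2 (by nlinarith [sq_nonneg s])
  have h2 : (0:ℝ) < (Real.sqrt (2 * Real.pi))⁻¹ :=
    inv_pos.2 (Real.sqrt_pos.2 (by positivity))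
  nlinarith

lemma hasDerivAt_G (u : ℝ) (v : ℝ) :
    HasDerivAt (fun w => ∫ t, Phi (u * t + w) * phi t) (∫ t, phi (u * t + v) * phi t) v := by
  have h := hasDerivAt_integral_of_dominated_loc_of_deriv_le (μ := (volume : Measure ℝ))
    (F := fun w t => Phi (u * t + w) * phi t) (F' := fun w t => phi (u * t + w) * phi t)
    (x₀ := v) (bound := fun t => (Real.sqrt (2 * Real.pi))⁻¹ * phi t) (s := Metric.ball v 1) (Metric.ball_mem_nhds v one_pos)
    (Filter.Eventually.of_forall fun w =>
      ((Phi_cont.comp (by fun_prop)).mul phi_cont).aestronglyMeasurable)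
    (PhiMul_integrable u v)
    ((phi_cont.comp (by fun_prop)).mul phi_cont).aestronglyMeasurable
    (Filter.Eventually.of_forall fun t w _ => by
      rw [Real.norm_eq_abs, abs_of_nonneg (mul_nonneg (phi_pos _).le (phi_pos t).le)]
      exact mul_le_mul_of_nonneg_right (phi_le _) (phi_pos t).le)
    (phi_integrable.const_mul _)
    (Filter.Eventually.of_forall fun t w _ => by
      have h1 : HasDerivAt (fun w : ℝ => u * t + w) 1 w := by
        simpa using (hasDerivAt_id w).const_add (u * t)
      have h2 := ((hasDerivAt_Phi (u * t + w)).comp w h1).mul_const (phi t)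
      simpa using h2)
  exact h.2

lemma key_Phi (u v : ℝ) :
    ∫ t, Phi (u * t + v) * phi t = Phi (v / Real.sqrt (1 + u ^ 2)) := by
  have hcpos : (0:ℝ) < Real.sqrt (1 + u ^ 2) := Real.sqrt_pos.2 (by positivity)
  set c := Real.sqrt (1 + u ^ 2) with hc
  set D : ℝ → ℝ := fun w => (∫ t, Phi (u * t + w) * phi t) - Phi (w / c) with hD
  have hderiv : ∀ w, HasDerivAt D 0 w := by
    intro w
    have h2 : HasDerivAt (fun w => Phi (w / c)) (phi (w / c) / c) w := by
      have := (hasDerivAt_Phi (w / c)).comp w ((hasDerivAt_id w).div_const c)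
      simpa [div_eq_mul_inv, Function.comp_def] using this
    have h3 := (hasDerivAt_G u w).sub h2
    rw [key_prod, ← hc] at h3
    rw [sub_self] at h3
    exact h3
  have hconst : ∀ x y, D x = D y := is_const_of_deriv_eq_zero
    (fun x => (hderiv x).differentiableAt) (fun x => (hderiv x).deriv)
  have hG : Tendsto (fun w => ∫ t, Phi (u * t + w) * phi t) atBot (nhds 0) := by
    have := MeasureTheory.tendsto_integral_filter_of_dominated_convergence
      (μ := (volume : Measure ℝ)) (l := atBot) (F := fun w t => Phi (u * t + w) * phi t)
      (f := fun _ => (0:ℝ)) phi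
      (Filter.Eventually.of_forall fun w =>
        ((Phi_cont.comp (by fun_prop)).mul phi_cont).aestronglyMeasurable)
      (Filter.Eventually.of_forall fun w => Filter.Eventually.of_forall fun t => by
        rw [Real.norm_eq_abs, abs_of_nonneg (mul_nonneg (Phi_pos _).le (phi_pos t).le)]
        nlinarith [Phi_pos (u * t + w), Phi_lt_one (u * t + w), phi_pos t])
      phi_integrable
      (Filter.Eventually.of_forall fun t => by
        have h1 : Tendsto (fun w : ℝ => u * t + w) atBot atBot :=
          tendsto_atBot_add_const_left _ _ tendsto_id
        have h2 : Tendsto (fun w => Phi (u * t + w)) atBot (nhds 0) :=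
          Phi_tendsto_atBot.comp h1
        simpa using h2.mul_const (phi t))
    simpa using this
  have hH : Tendsto (fun w => Phi (w / c)) atBot (nhds 0) :=
    Phi_tendsto_atBot.comp (tendsto_id.atBot_div_const hcpos)
  have hlim : Tendsto D atBot (nhds 0) := by simpa using hG.sub hH
  have hDv : D v = 0 := by
    have hconst' : Tendsto D atBot (nhds (D v)) := by
      have : D = fun _ => D v := funext fun x => hconst x v
      rw [this]; exact tendsto_const_nhds
    exact tendsto_nhds_unique hconst' hlim
  have := sub_eq_zero.1 hDv
  simpa [hD] using this

theorem stmt_17 (u v : ℝ) :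
    ∫ t, Real.sqrt (GaussI (Phi (u * t + v)) ^ 2 + (u * phi (u * t + v)) ^ 2) * phi t =
      GaussI (∫ t, Phi (u * t + v) * phi t) := by
  have hc : (0:ℝ) < 1 + u ^ 2 := by positivity
  have hsc : (0:ℝ) < Real.sqrt (1 + u ^ 2) := Real.sqrt_pos.2 hc
  have h1 : ∀ t, Real.sqrt (GaussI (Phi (u * t + v)) ^ 2 + (u * phi (u * t + v)) ^ 2) * phi t
      = Real.sqrt (1 + u ^ 2) * (phi (u * t + v) * phi t) := by
    intro t
    rw [GaussI_Phi]
    rw [show phi (u * t + v) ^ 2 + (u * phi (u * t + v)) ^ 2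
        = (1 + u ^ 2) * phi (u * t + v) ^ 2 by ring]
    rw [Real.sqrt_mul hc.le, Real.sqrt_sq (phi_pos _).le]
    ring
  simp_rw [h1]
  rw [integral_const_mul, key_prod, key_Phi, GaussI_Phi,
    mul_div_cancel₀ _ hsc.ne']
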